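/- In a *-algebra generated by self-adjoint elements u_{ij} forming an orthogonal matrix, the half-commutation relations abc = cba (for all a,b,c among the generators) together with the cubic relations (u_{ij}u_{ik} = 0 = u_{ji}u_{ki} for j ≠ k) imply the ultracubic relations: a c b = 0 for all a ≠ b on the same row or column of u and every generator c. -/
import Mathlib


/-- In a unital `*`-algebra generated by self-adjoint elements `u_{ij}` forming
an orthogonal matrix, the half-commutation relations `abc = cba` together with
the cubic relations imply the ultracubic relations `a c b = 0` for all `a ≠ b`
on the same row or column of `u` and every generator `c`. -/
theorem halfComm_cubic_imp_ultracubic {A : Type*} [Ring A] [StarRing A] {n : ℕ}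
    (u : Fin n → Fin n → A)
    (hsa : ∀ i j, star (u i j) = u i j)
    (horth_row : ∀ i j, ∑ m, u i m * u j m = if i = j then (1 : A) else 0)
    (horth_col : ∀ i j, ∑ m, u m i * u m j = if i = j then (1 : A) else 0)
    (hcubic_row : ∀ i j k, j ≠ k → u i j * u i k = 0)
    (hcubic_col : ∀ i j k, j ≠ k → u j i * u k i = 0)
    (hhalf : ∀ a b c : Fin n × Fin n,
      u a.1 a.2 * u b.1 b.2 * u c.1 c.2 = u c.1 c.2 * u b.1 b.2 * u a.1 a.2) :
    ∀ (i j l : Fin n) (c : Fin n × Fin n), j ≠ l →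
      u i j * u c.1 c.2 * u i l = 0 ∧ u j i * u c.1 c.2 * u l i = 0 := by
  intro i j l c hjl
  set p := c.1
  set q := c.2
  constructor
  · have hone : (∑ m, u i m * u i m) = 1 := by simpa using horth_row i i
    calc u i j * u p q * u i l
        = u i j * u p q * (∑ m, u i m * u i m) * u i l := by rw [hone, mul_one]
      _ = ∑ m, u i j * u p q * (u i m * u i m) * u i l := by
          rw [Finset.mul_sum, Finset.sum_mul]
      _ = u i j * u p q * (u i l * u i l) * u i l := by
          refine Finset.sum_eq_single l (fun m _ hm => ?_) (by simp)
          have h0 : u i m * u i l = 0 := hcubic_row i m l hm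
          simp only [mul_assoc]
          rw [h0]
          simp
      _ = u i j * (u p q * u i l * u i l) * u i l := by noncomm_ring
      _ = u i j * (u i l * u i l * u p q) * u i l := by rw [hhalf (p, q) (i, l) (i, l)]
      _ = (u i j * u i l) * (u i l * u p q * u i l) := by noncomm_ring
      _ = 0 := by rw [hcubic_row i j l hjl, zero_mul]
  · have hone : (∑ m, u m i * u m i) = 1 := by simpa using horth_col i i
    calc u j i * u p q * u l i
        = u j i * u p q * (∑ m, u m i * u m i) * u l i := by rw [hone, mul_one]
      _ = ∑ m, u j i * u p q * (u m i * u m i) * u l i := by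
          rw [Finset.mul_sum, Finset.sum_mul]
      _ = u j i * u p q * (u l i * u l i) * u l i := by
          refine Finset.sum_eq_single l (fun m _ hm => ?_) (by simp)
          have h0 : u m i * u l i = 0 := hcubic_col i m l hm
          simp only [mul_assoc]
          rw [h0]
          simp
      _ = u j i * (u p q * u l i * u l i) * u l i := by noncomm_ring
      _ = u j i * (u l i * u l i * u p q) * u l i := by rw [hhalf (p, q) (l, i) (l, i)]
      _ = (u j i * u l i) * (u l i * u p q * u l i) := by noncomm_ring
      _ = 0 := by rw [hcubic_col i j l hjl, zero_mul]
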